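/- arXiv:0802.4260 — 3 statements merged into one kernel-verified Lean document; each statement's English description precedes it below -/
import Mathlib

section
/- The function x ↦ log(cosh x) / x² is decreasing on (0, ∞). -/
open Real Set

private lemma hg (x : ℝ) :
    HasDerivAt (fun x => 2 * Real.log (Real.cosh x) - x * Real.sinh x / Real.cosh x)
      ((Real.sinh x * Real.cosh x - x) / Real.cosh x ^ 2) x := by
  have hc : Real.cosh x ≠ 0 := (Real.cosh_pos x).ne'
  have h1 : HasDerivAt Real.cosh (Real.sinh x) x := Real.hasDerivAt_cosh x
  have h2 : HasDerivAt (fun x => Real.log (Real.cosh x)) (Real.sinh x / Real.cosh x) x := h1.log hc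
  have h3 : HasDerivAt Real.sinh (Real.cosh x) x := Real.hasDerivAt_sinh x
  have h4 : HasDerivAt (fun x => x * Real.sinh x)
      (1 * Real.sinh x + x * Real.cosh x) x := (hasDerivAt_id x).mul h3
  have h5 : HasDerivAt (fun x => x * Real.sinh x / Real.cosh x)
      (((1 * Real.sinh x + x * Real.cosh x) * Real.cosh x
        - x * Real.sinh x * Real.sinh x) / Real.cosh x ^ 2) x := h4.div h1 hc
  have h6 : HasDerivAt (fun x => 2 * Real.log (Real.cosh x) - x * Real.sinh x / Real.cosh x)
      (2 * (Real.sinh x / Real.cosh x) - ((1 * Real.sinh x + x * Real.cosh x) * Real.cosh x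
        - x * Real.sinh x * Real.sinh x) / Real.cosh x ^ 2) x := (h2.const_mul 2).sub h5
  convert h6 using 1
  have hid : Real.cosh x ^ 2 - Real.sinh x ^ 2 = 1 := Real.cosh_sq_sub_sinh_sq x
  field_simp
  linear_combination x * hid

private lemma g_nonneg {x : ℝ} (hx : 0 ≤ x) :
    0 ≤ 2 * Real.log (Real.cosh x) - x * Real.sinh x / Real.cosh x := by
  set g : ℝ → ℝ := fun x => 2 * Real.log (Real.cosh x) - x * Real.sinh x / Real.cosh x with hgdef
  have hmono : MonotoneOn g (Set.Ici 0) := by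
    apply monotoneOn_of_deriv_nonneg (convex_Ici 0)
    · exact fun y _ => ((hg y).continuousAt).continuousWithinAt
    · exact fun y _ => ((hg y).differentiableAt).differentiableWithinAt
    · intro y hy
      rw [interior_Ici] at hy
      rw [(hg y).deriv]
      apply div_nonneg _ (sq_nonneg _)
      have h1 : y ≤ Real.sinh y := (Real.self_le_sinh_iff).mpr (le_of_lt hy)
      have h2 : (1:ℝ) ≤ Real.cosh y := Real.one_le_cosh y
      nlinarith [le_of_lt (Set.mem_Ioi.mp hy)]
  have h0 : g 0 = 0 := by simp [hgdef]
  have := hmono (Set.self_mem_Ici) hx hx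
  rw [h0] at this
  exact this

theorem log_cosh_div_sq_decreasing :
    AntitoneOn (fun x : ℝ => Real.log (Real.cosh x) / x ^ 2) (Set.Ioi 0) := by
  have key : ∀ x ∈ interior (Set.Ioi (0:ℝ)),
      HasDerivAt (fun x : ℝ => Real.log (Real.cosh x) / x ^ 2)
        ((Real.sinh x / Real.cosh x * x ^ 2 - Real.log (Real.cosh x) * (2 * x)) / (x ^ 2) ^ 2) x := by
    intro x hx
    rw [interior_Ioi] at hx
    have hc : Real.cosh x ≠ 0 := (Real.cosh_pos x).ne'
    have h2 : HasDerivAt (fun x => Real.log (Real.cosh x)) (Real.sinh x / Real.cosh x) x :=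
      (Real.hasDerivAt_cosh x).log hc
    have h3 : HasDerivAt (fun x : ℝ => x ^ 2) (2 * x) x := by
      simpa using (hasDerivAt_pow 2 x)
    exact h2.div h3 (pow_ne_zero 2 (ne_of_gt hx))
  apply antitoneOn_of_deriv_nonpos (convex_Ioi 0)
  · apply ContinuousOn.div
    · exact (Real.continuous_cosh.log (fun y => (Real.cosh_pos y).ne')).continuousOn
    · exact (continuous_pow 2).continuousOn
    · intro y hy; exact pow_ne_zero 2 (ne_of_gt (Set.mem_Ioi.mp hy))
  · exact fun x hx => ((key x hx).differentiableAt).differentiableWithinAt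
  · intro x hx
    rw [(key x hx).deriv]
    rw [interior_Ioi] at hx
    apply div_nonpos_of_nonpos_of_nonneg _ (sq_nonneg _)
    have hgx := g_nonneg (le_of_lt hx)
    have : Real.sinh x / Real.cosh x * x ^ 2 - Real.log (Real.cosh x) * (2 * x)
        = -x * (2 * Real.log (Real.cosh x) - x * Real.sinh x / Real.cosh x) := by ring
    rw [this]
    exact mul_nonpos_of_nonpos_of_nonneg (by have := Set.mem_Ioi.mp hx; linarith) hgx
end

section
/- For all real a and all s ≥ 1, cosh(s·a) ≤ (cosh a)^{s²}. -/
open Real Set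

/-- key lemma: `x * tanh x ≤ 2 * log (cosh x)` -/
lemma aux_tanh (x : ℝ) : x * (Real.sinh x / Real.cosh x) ≤ 2 * Real.log (Real.cosh x) := by
  -- reduce to x ≥ 0 by evenness
  have even_case : ∀ y : ℝ, 0 ≤ y →
      y * (Real.sinh y / Real.cosh y) ≤ 2 * Real.log (Real.cosh y) := by
    intro y hy
    set F : ℝ → ℝ := fun u => 2 * Real.log (Real.cosh u) - u * (Real.sinh u / Real.cosh u) with hF
    have hderiv : ∀ u : ℝ, HasDerivAt F ((Real.sinh u * Real.cosh u - u) / Real.cosh u ^ 2) u := by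
      intro u
      have hc : Real.cosh u ≠ 0 := (Real.cosh_pos u).ne'
      have h1 : HasDerivAt (fun u => Real.log (Real.cosh u)) (Real.sinh u / Real.cosh u) u := by
        have := (Real.hasDerivAt_log hc).comp u (Real.hasDerivAt_cosh u)
        simpa [Function.comp_def, div_eq_inv_mul, mul_comm] using this
      have h2 : HasDerivAt (fun u : ℝ => Real.sinh u / Real.cosh u)
          ((Real.cosh u * Real.cosh u - Real.sinh u * Real.sinh u) / Real.cosh u ^ 2) u :=
        (Real.hasDerivAt_sinh u).div (Real.hasDerivAt_cosh u) hc
      have h3 : HasDerivAt (fun u : ℝ => u * (Real.sinh u / Real.cosh u))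
          (1 * (Real.sinh u / Real.cosh u) +
            u * ((Real.cosh u * Real.cosh u - Real.sinh u * Real.sinh u) / Real.cosh u ^ 2)) u :=
        (hasDerivAt_id u).mul h2
      have := ((h1.const_mul 2).sub h3)
      refine this.congr_deriv ?_
      have hcc : Real.cosh u ^ 2 ≠ 0 := pow_ne_zero 2 hc
      have hid : Real.cosh u * Real.cosh u - Real.sinh u * Real.sinh u = 1 := by
        have := Real.cosh_sq_sub_sinh_sq u; nlinarith [this]
      rw [hid]
      field_simp
      ring
    have hmono : MonotoneOn F (Ici (0:ℝ)) := by
      apply monotoneOn_of_deriv_nonneg (convex_Ici 0)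
      · exact fun u _ => (hderiv u).differentiableAt.continuousAt.continuousWithinAt
      · intro u hu
        exact (hderiv u).differentiableAt.differentiableWithinAt
      · intro u hu
        rw [interior_Ici, mem_Ioi] at hu
        rw [(hderiv u).deriv]
        apply div_nonneg _ (sq_nonneg _)
        have h1 : u ≤ Real.sinh u := Real.self_le_sinh_iff.2 hu.le
        have h2 : 1 ≤ Real.cosh u := Real.one_le_cosh u
        nlinarith [Real.sinh_nonneg_iff.2 hu.le]
    have h0 : F 0 = 0 := by simp [hF]
    have := hmono (self_mem_Ici) (mem_Ici.2 hy) hy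
    rw [h0] at this
    simp only [hF] at this
    linarith
  rcases le_total 0 x with hx | hx
  · exact even_case x hx
  · have := even_case (-x) (by linarith)
    simpa [Real.sinh_neg, Real.cosh_neg, neg_div, mul_neg, neg_mul, neg_neg] using this

theorem cosh_smul_le_cosh_rpow (a s : ℝ) (hs : 1 ≤ s) :
    Real.cosh (s * a) ≤ Real.cosh a ^ (s ^ 2 : ℝ) := by
  set ψ : ℝ → ℝ := fun t => Real.log (Real.cosh (t * a)) / t ^ 2 with hψ
  have hc : ∀ t : ℝ, Real.cosh (t * a) ≠ 0 := fun t => (Real.cosh_pos _).ne'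
  have hderiv : ∀ t : ℝ, t ≠ 0 → HasDerivAt ψ
      ((Real.sinh (t * a) * a / Real.cosh (t * a) * t ^ 2 -
        Real.log (Real.cosh (t * a)) * (2 * t)) / (t ^ 2) ^ 2) t := by
    intro t ht
    have h1 : HasDerivAt (fun t : ℝ => Real.log (Real.cosh (t * a)))
        (Real.sinh (t * a) * a / Real.cosh (t * a)) t := by
      have hm : HasDerivAt (fun t : ℝ => t * a) a t := hasDerivAt_mul_const a
      have hcc : HasDerivAt (fun t : ℝ => Real.cosh (t * a)) (Real.sinh (t * a) * a) t :=
        (Real.hasDerivAt_cosh (t * a)).comp (h := fun t : ℝ => t * a) t hm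
      have := (Real.hasDerivAt_log (hc t)).comp t hcc
      simpa [Function.comp_def, div_eq_inv_mul, mul_comm] using this
    have h2 : HasDerivAt (fun t : ℝ => t ^ 2) (2 * t) t := by
      simpa using hasDerivAt_pow 2 t
    exact h1.div h2 (pow_ne_zero 2 ht)
  have hanti : AntitoneOn ψ (Ici (1:ℝ)) := by
    apply antitoneOn_of_deriv_nonpos (convex_Ici 1)
    · exact fun t ht =>
        (hderiv t (by rw [mem_Ici] at ht; positivity)).differentiableAt.continuousAt.continuousWithinAt
    · intro t ht
      rw [interior_Ici, mem_Ioi] at ht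
      exact (hderiv t (by linarith)).differentiableAt.differentiableWithinAt
    · intro t ht
      rw [interior_Ici, mem_Ioi] at ht
      have ht0 : (0:ℝ) < t := by linarith
      rw [(hderiv t ht0.ne').deriv]
      apply div_nonpos_of_nonpos_of_nonneg _ (sq_nonneg _)
      have key := aux_tanh (t * a)
      -- sinh(ta)*a/cosh(ta)*t^2 - log(cosh(ta))*(2t) = t*( (ta)*(sinh/cosh) - 2 log cosh ) ≤ 0
      have : Real.sinh (t * a) * a / Real.cosh (t * a) * t ^ 2 -
          Real.log (Real.cosh (t * a)) * (2 * t)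
          = t * ((t * a) * (Real.sinh (t * a) / Real.cosh (t * a))
              - 2 * Real.log (Real.cosh (t * a))) := by
        field_simp
      rw [this]
      exact mul_nonpos_of_nonneg_of_nonpos ht0.le (by linarith)
  have hmem1 : (1:ℝ) ∈ Ici (1:ℝ) := self_mem_Ici
  have hmems : s ∈ Ici (1:ℝ) := hs
  have hle := hanti hmem1 hmems hs
  simp only [hψ, one_mul, one_pow, div_one] at hle
  have hs2 : (0:ℝ) < s ^ 2 := by positivity
  have hlog : Real.log (Real.cosh (s * a)) ≤ s ^ 2 * Real.log (Real.cosh a) := by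
    rw [div_le_iff₀ hs2] at hle
    linarith
  have h1 : Real.cosh (s * a) = Real.exp (Real.log (Real.cosh (s * a))) :=
    (Real.exp_log (Real.cosh_pos _)).symm
  rw [h1, Real.rpow_def_of_pos (Real.cosh_pos _)]
  refine Real.exp_le_exp.2 ?_
  rw [mul_comm s a] at *
  linarith
end

section
/- Let m = (δ₁ + δ₋₁)/2 be the symmetric Bernoulli measure on ℝ. For every r ∈ (0,1] and every a ∈ ℝ, (∫ e^{(a/r)·x} dm(x))^{r²} ≤ ∫ e^{a·x} dm(x); equivalently, (cosh(a/r))^{r²} ≤ cosh(a). -/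
open MeasureTheory

noncomputable def bernoulliSym : Measure ℝ :=
  (1 / 2 : ENNReal) • (Measure.dirac (1 : ℝ) + Measure.dirac (-1 : ℝ))

lemma psi_nonneg {x : ℝ} (hx : 0 ≤ x) :
    x * Real.sinh x / Real.cosh x ≤ 2 * Real.log (Real.cosh x) := by
  set ψ : ℝ → ℝ := fun x => 2 * Real.log (Real.cosh x) - x * Real.sinh x / Real.cosh x with hψ
  have hcne : ∀ z : ℝ, Real.cosh z ≠ 0 := fun z => (Real.cosh_pos z).ne'
  have hD : ∀ y : ℝ, HasDerivAt ψ ((Real.sinh y * Real.cosh y - y) / Real.cosh y ^ 2) y := by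
    intro y
    have hc : Real.cosh y ≠ 0 := hcne y
    have h1 : HasDerivAt (fun z => Real.log (Real.cosh z)) (Real.sinh y / Real.cosh y) y := by
      simpa [div_eq_mul_inv, mul_comm, Function.comp_def] using
        (Real.hasDerivAt_log hc).comp y (Real.hasDerivAt_cosh y)
    have h2 : HasDerivAt (fun z => z * Real.sinh z / Real.cosh z)
        ((( 1 * Real.sinh y + y * Real.cosh y) * Real.cosh y - y * Real.sinh y * Real.sinh y)
          / Real.cosh y ^ 2) y :=
      ((hasDerivAt_id y).mul (Real.hasDerivAt_sinh y)).div (Real.hasDerivAt_cosh y) hc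
    have := (h1.const_mul 2).sub h2
    refine this.congr_deriv (Eq.symm ?_)
    have hid : Real.cosh y ^ 2 - Real.sinh y ^ 2 = 1 := Real.cosh_sq_sub_sinh_sq y
    field_simp
    linear_combination y * hid
  have hcont : Continuous ψ := by
    apply Continuous.sub
    · exact continuous_const.mul (Real.continuous_cosh.log hcne)
    · exact (continuous_id.mul Real.continuous_sinh).div Real.continuous_cosh hcne
  have hmono : MonotoneOn ψ (Set.Ici 0) := by
    apply monotoneOn_of_deriv_nonneg (convex_Ici 0) hcont.continuousOn
    · intro y _
      exact (hD y).differentiableAt.differentiableWithinAt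
    · intro y hy
      rw [interior_Ici] at hy
      rw [(hD y).deriv]
      have hy0 : 0 < y := hy
      have h1 : y ≤ Real.sinh y := (Real.self_le_sinh_iff).2 hy0.le
      have h2 : (1:ℝ) ≤ Real.cosh y := Real.one_le_cosh y
      have hs : 0 ≤ Real.sinh y := le_trans hy0.le h1
      have : y ≤ Real.sinh y * Real.cosh y := le_trans h1 (le_mul_of_one_le_right hs h2)
      apply div_nonneg (by linarith) (by positivity)
  have h0 : ψ 0 = 0 := by simp [hψ]
  have := hmono (Set.self_mem_Ici) (Set.mem_Ici.2 hx) hx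
  rw [h0] at this
  simpa [hψ, sub_nonneg] using this

lemma logcosh_div_sq_antitone {x y : ℝ} (hx : 0 < x) (hxy : x ≤ y) :
    x ^ 2 * Real.log (Real.cosh y) ≤ y ^ 2 * Real.log (Real.cosh x) := by
  set h : ℝ → ℝ := fun z => Real.log (Real.cosh z) / z ^ 2 with hh
  have hcne : ∀ z : ℝ, Real.cosh z ≠ 0 := fun z => (Real.cosh_pos z).ne'
  have hD : ∀ z : ℝ, z ≠ 0 → HasDerivAt h ((Real.sinh z / Real.cosh z * z ^ 2 -
      Real.log (Real.cosh z) * (2 * z)) / (z ^ 2) ^ 2) z := by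
    intro z hz
    have h1 : HasDerivAt (fun w => Real.log (Real.cosh w)) (Real.sinh z / Real.cosh z) z := by
      simpa [div_eq_mul_inv, mul_comm, Function.comp_def] using
        (Real.hasDerivAt_log (hcne z)).comp z (Real.hasDerivAt_cosh z)
    have h2 : HasDerivAt (fun w : ℝ => w ^ 2) (2 * z) z := by
      simpa using hasDerivAt_pow 2 z
    exact h1.div h2 (pow_ne_zero 2 hz)
  have hanti : AntitoneOn h (Set.Ioi 0) := by
    apply antitoneOn_of_deriv_nonpos (convex_Ioi 0)
    · apply ContinuousOn.div
      · exact (Real.continuous_cosh.log hcne).continuousOn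
      · exact (continuous_pow 2).continuousOn
      · intro z hz; exact pow_ne_zero 2 (ne_of_gt hz)
    · intro z hz
      rw [interior_Ioi] at hz
      exact (hD z (ne_of_gt hz)).differentiableAt.differentiableWithinAt
    · intro z hz
      rw [interior_Ioi] at hz
      rw [(hD z (ne_of_gt hz)).deriv]
      apply div_nonpos_of_nonpos_of_nonneg _ (by positivity)
      have key := psi_nonneg (le_of_lt hz)
      have heq : Real.sinh z / Real.cosh z * z ^ 2 = (z * Real.sinh z / Real.cosh z) * z := by
        field_simp
      rw [heq]
      nlinarith [mul_le_mul_of_nonneg_right key (le_of_lt hz)]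
  have := hanti (Set.mem_Ioi.2 hx) (Set.mem_Ioi.2 (lt_of_lt_of_le hx hxy)) hxy
  rw [hh] at this
  simp only at this
  have hy : 0 < y := lt_of_lt_of_le hx hxy
  rw [div_le_div_iff₀ (by positivity) (by positivity)] at this
  linarith

lemma cosh_rpow_le (r a : ℝ) (hr0 : 0 < r) (hr1 : r ≤ 1) :
    Real.cosh (a / r) ^ (r ^ 2 : ℝ) ≤ Real.cosh a := by
  rcases eq_or_ne a 0 with rfl | ha
  · simp
  · have hx : 0 < |a| := abs_pos.2 ha
    have hy : |a| ≤ |a| / r := by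
      rw [le_div_iff₀ hr0]
      exact mul_le_of_le_one_right hx.le hr1
    have hkey := logcosh_div_sq_antitone hx hy
    have hyr : |a| / r = |a / r| := by
      rw [abs_div, abs_of_pos hr0]
    rw [← Real.cosh_abs a, ← Real.cosh_abs (a / r), ← hyr]
    rw [Real.rpow_def_of_pos (Real.cosh_pos _), ← Real.exp_log (Real.cosh_pos |a|)]
    apply Real.exp_le_exp.2
    have hpow : 0 < (|a| / r) ^ 2 := by positivity
    have h3 : (|a| / r) ^ 2 * (Real.log (Real.cosh (|a| / r)) * r ^ 2)
        = |a| ^ 2 * Real.log (Real.cosh (|a| / r)) := by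
      field_simp
    rw [← mul_le_mul_iff_right₀ hpow, h3]
    exact hkey

lemma integrable_dirac'' {f : ℝ → ℝ} (hf : Measurable f) (a : ℝ) :
    Integrable f (Measure.dirac a) := by
  refine ⟨hf.aestronglyMeasurable, ?_⟩
  simp [HasFiniteIntegral, lintegral_dirac]

lemma integral_bernoulli (c : ℝ) :
    ∫ x, Real.exp (c * x) ∂bernoulliSym = Real.cosh c := by
  have hm : Measurable fun x : ℝ => Real.exp (c * x) :=
    (Real.continuous_exp.comp (continuous_const.mul continuous_id)).measurable
  unfold bernoulliSym
  rw [integral_smul_measure,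
    integral_add_measure (integrable_dirac'' hm 1) (integrable_dirac'' hm (-1)),
    integral_dirac, integral_dirac]
  simp [Real.cosh_eq, smul_eq_mul]
  ring

theorem bernoulli_strong_hypercontractivity (r a : ℝ) (hr : r ∈ Set.Ioc (0 : ℝ) 1) :
    (∫ x, Real.exp ((a / r) * x) ∂bernoulliSym) ^ (r ^ 2 : ℝ) ≤
      ∫ x, Real.exp (a * x) ∂bernoulliSym := by
  rw [integral_bernoulli, integral_bernoulli]
  exact cosh_rpow_le r a hr.1 hr.2
end
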